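/- Fix n ≥ 1 and a base point z̄ ∈ X_n(M̂). Let Ω^{2n} be the set of all z ∈ X_n(M̂) such that for every t ∈ [0,1], the n-tuple (s_{z̄_i z_i}(t))_{i=1,…,n} lies in X_n(M), where s_{xy} denotes the straight segment from x to y in the chart M̂ ≅ (−1/2,1/2) × I. Then Ω^{2n} is an open, dense subset of X_n(M) and has full measure in X_n(M). -/

import Mathlib

noncomputable section
open Set MeasureTheory

/-- The deck transformation relation defining the Möbius band: `(z,w) ↦ (z+1, -w)`. -/
def MobRel (p q : ℝ × ℝ) : Prop :=
  ∃ n : ℤ, q.1 = p.1 + n ∧ q.2 = (-1 : ℝ) ^ n * p.2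

/-- The extended (open) Möbius band `ℝ²/⟨τ⟩`. -/
def Mext : Type := Quot MobRel

instance : TopologicalSpace Mext := instTopologicalSpaceQuot

/-- Projection from the plane. -/
def piE : ℝ × ℝ → Mext := Quot.mk _

/-- The strip `ℝ × [-1/2, 1/2]`. -/
def stripS : Set (ℝ × ℝ) := {p | p.2 ∈ Icc (-(1:ℝ)/2) (1/2)}

/-- The closed Möbius band `M = (ℝ × [-1/2,1/2])/⟨τ⟩`. -/
def Mob : Type := {x : Mext // x ∈ piE '' stripS}

instance : TopologicalSpace Mob := instTopologicalSpaceSubtype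

/-- The projection `π` from the strip to the Möbius band. -/
def piM (p : ℝ × ℝ) (hp : p ∈ stripS) : Mob := ⟨piE p, ⟨p, hp, rfl⟩⟩

/-- The boundary `∂M` of the Möbius band. -/
def MobBoundary : Set Mob := {x | ∃ p ∈ stripS, piE p = x.1 ∧ |p.2| = 1/2}

/-- The interior of the Möbius band. -/
def MobInterior : Set Mob := {x | ∃ p ∈ stripS, piE p = x.1 ∧ |p.2| < 1/2}

/-- The "branch cut" `ℓ = π({1/2} × I)`. -/
def lineL : Set Mob := {x | ∃ y ∈ Icc (-(1:ℝ)/2) (1/2), piE (1/2, y) = x.1}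

/-- `M̂ = M \ ℓ`, an embedded open disc chart. -/
def Mhat : Set Mob := {x | x ∉ lineL}

instance : MeasurableSpace Mext := borel _
instance : BorelSpace Mext := ⟨rfl⟩
instance : MeasurableSpace Mob := Subtype.instMeasurableSpace

/-- A fundamental domain for the Möbius band. -/
def fundDom : Set (ℝ × ℝ) := Ico (0:ℝ) 1 ×ˢ Icc (-(1:ℝ)/2) (1/2)

/-- The measure on the Möbius band induced by the standard density form `ω`,
i.e. the push-forward of Lebesgue measure on a fundamental domain. -/
def mobMeasure : Measure Mob :=
  Measure.comap Subtype.val ((volume.restrict fundDom).map piE)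


/-- The configuration space `X_n(S)` of `n` distinct ordered points in `S`. -/
def Conf (S : Type*) [TopologicalSpace S] (n : ℕ) : Type _ :=
  {f : Fin n → S // Function.Injective f}

instance (S : Type*) [TopologicalSpace S] (n : ℕ) : TopologicalSpace (Conf S n) :=
  instTopologicalSpaceSubtype

/-- The coordinate-permutation relation on configurations. -/
def permRel (S : Type*) [TopologicalSpace S] (n : ℕ) : Conf S n → Conf S n → Prop :=
  fun f g => ∃ σ : Equiv.Perm (Fin n), f.1 = g.1 ∘ σ

/-- The unordered configuration space `X_n(S)/𝔖_n`. -/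
def UConf (S : Type*) [TopologicalSpace S] (n : ℕ) : Type _ := Quot (permRel S n)

instance (S : Type*) [TopologicalSpace S] (n : ℕ) : TopologicalSpace (UConf S n) :=
  instTopologicalSpaceQuot

/-- The canonical lift of a point of the Möbius band to the strip, with first coordinate
in `[-1/2, 1/2)`; for points of `M̂` this is the chart `M̂ ≅ (-1/2,1/2) × I`. -/
def Lift (x : Mob) : ℝ × ℝ :=
  Classical.epsilon fun p => piE p = x.1 ∧ p ∈ stripS ∧ p.1 ∈ Ico (-(1:ℝ)/2) (1/2)

/-- Clamp the second coordinate into `[-1/2,1/2]`. -/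
def clampY (y : ℝ) : ℝ := max (-(1:ℝ)/2) (min (1/2) y)

/-- Projection `ℝ² → M` (clamping the second coordinate, which is harmless for points of
the strip). -/
def toMob (p : ℝ × ℝ) : Mob :=
  ⟨piE (p.1, clampY p.2),
    ⟨(p.1, clampY p.2), ⟨le_max_left _ _, max_le (by norm_num) (min_le_left _ _)⟩, rfl⟩⟩

/-- The straight segment from `a` to `b` in the plane. -/
def seg (a b : ℝ × ℝ) (t : ℝ) : ℝ × ℝ := (1 - t) • a + t • b

/-- The set `Ω^{2n} ⊆ X_n(M)`: configurations `z ∈ X_n(M̂)` such that the tuple of straight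
segments `(s_{z̄ᵢ zᵢ}(t))ᵢ` (in the chart `M̂`) is a configuration in `X_n(M)` for all
`t ∈ [0,1]`. -/
def OmegaSet (n : ℕ) (zbar : Fin n → Mob) : Set (Conf Mob n) :=
  {z | (∀ i, z.1 i ∈ Mhat) ∧
    ∀ t ∈ Icc (0:ℝ) 1, Function.Injective fun i => toMob (seg (Lift (zbar i)) (Lift (z.1 i)) t)}

instance (n : ℕ) : MeasurableSpace (Conf Mob n) := Subtype.instMeasurableSpace

/-- The measure on the configuration space `X_n(M)` induced by the density measure on `M`. -/
def confMeasure (n : ℕ) : Measure (Conf Mob n) :=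
  Measure.comap Subtype.val (Measure.pi fun _ : Fin n => mobMeasure)

/-! ### Auxiliary development -/

section Aux

open Function Topology

/-- half -/
local notation "½" => (1:ℝ)/2

lemma neg_one_zpow_cases (n : ℤ) : ((-1:ℝ)) ^ n = 1 ∨ ((-1:ℝ)) ^ n = -1 := by
  rcases Int.even_or_odd n with h | h
  · exact Or.inl (h.neg_one_zpow)
  · exact Or.inr (h.neg_one_zpow)

lemma abs_neg_one_zpow' (n : ℤ) : |((-1:ℝ)) ^ n| = 1 := by
  rcases neg_one_zpow_cases n with h | h <;> rw [h] <;> norm_num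

lemma neg_one_zpow_mul_self (n : ℤ) (y : ℝ) : ((-1:ℝ)) ^ n * (((-1:ℝ)) ^ n * y) = y := by
  rcases neg_one_zpow_cases n with h | h <;> rw [h] <;> ring

lemma neg_one_zpow_neg (n : ℤ) : ((-1:ℝ)) ^ (-n) = ((-1:ℝ)) ^ n := by
  rw [zpow_neg]
  rcases neg_one_zpow_cases n with h | h <;> rw [h] <;> norm_num

lemma mobRel_equivalence : Equivalence MobRel := by
  constructor
  · intro p; exact ⟨0, by simp⟩
  · rintro p q ⟨n, h1, h2⟩
    refine ⟨-n, by push_cast; linarith, ?_⟩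
    rw [h2, ← mul_assoc, ← zpow_add₀ (by norm_num : (-1:ℝ) ≠ 0)]
    simp
  · rintro p q r ⟨n, h1, h2⟩ ⟨m, h3, h4⟩
    refine ⟨n + m, by push_cast; linarith, ?_⟩
    rw [h4, h2, ← mul_assoc, ← zpow_add₀ (by norm_num : (-1:ℝ) ≠ 0), add_comm m n]

lemma piE_eq_iff {p q : ℝ × ℝ} : piE p = piE q ↔ MobRel p q := by
  constructor
  · intro h
    exact mobRel_equivalence.eqvGen_iff.mp (Quot.eqvGen_exact h)
  · exact Quot.sound

lemma mobRel_mk (p : ℝ × ℝ) (n : ℤ) : MobRel p (p.1 + n, ((-1:ℝ)) ^ n * p.2) :=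
  ⟨n, rfl, rfl⟩

/-- The "n = 0" trick: related points whose first coordinates are close are equal. -/
lemma mobRel_eq_of_close {p q : ℝ × ℝ} (h : MobRel p q) (hc : |q.1 - p.1| < 1) : p = q := by
  obtain ⟨n, h1, h2⟩ := h
  have hn0 : n = 0 := by
    have h' : |(n:ℝ)| < 1 := by rwa [h1, add_sub_cancel_left] at hc
    have h'' : ((|n| : ℤ) : ℝ) < 1 := by rwa [Int.cast_abs]
    have h3 : |n| < 1 := by exact_mod_cast h''
    rcases abs_lt.mp h3 with ⟨h4, h5⟩
    omega
  subst hn0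
  ext
  · simpa using h1.symm
  · simpa using h2.symm

lemma mem_stripS_iff {p : ℝ × ℝ} : p ∈ stripS ↔ |p.2| ≤ ½ := by
  simp only [stripS, mem_setOf_eq, mem_Icc, abs_le]
  constructor <;> intro h <;> constructor <;> linarith [h.1, h.2]

lemma stripS_rel {p q : ℝ × ℝ} (hp : p ∈ stripS) (h : MobRel p q) : q ∈ stripS := by
  obtain ⟨n, h1, h2⟩ := h
  rw [mem_stripS_iff] at hp ⊢
  rw [h2, abs_mul, abs_neg_one_zpow', one_mul]
  exact hp

lemma isClosed_stripS : IsClosed stripS :=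
  IsClosed.preimage continuous_snd isClosed_Icc

lemma continuous_piE : Continuous piE := continuous_quot_mk

lemma piE_preimage_image_stripS : piE ⁻¹' (piE '' stripS) = stripS := by
  apply Subset.antisymm
  · rintro p ⟨q, hq, hpi⟩
    exact stripS_rel hq (piE_eq_iff.mp hpi)
  · exact subset_preimage_image _ _

lemma isOpen_Mext_iff {s : Set Mext} : IsOpen s ↔ IsOpen (piE ⁻¹' s) := Iff.rfl

lemma isClosed_range_mob : IsClosed (piE '' stripS) := by
  rw [← isOpen_compl_iff, isOpen_Mext_iff]
  have : piE ⁻¹' (piE '' stripS)ᶜ = stripSᶜ := by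
    rw [preimage_compl, piE_preimage_image_stripS]
  rw [this]
  exact isClosed_stripS.isOpen_compl

lemma isOpenMap_piE : IsOpenMap piE := by
  intro U hU
  rw [isOpen_Mext_iff]
  have : piE ⁻¹' (piE '' U) = ⋃ n : ℤ, (fun p : ℝ × ℝ => (p.1 - n, ((-1:ℝ)) ^ n * p.2)) ⁻¹' U := by
    ext p
    simp only [mem_preimage, mem_iUnion, mem_image]
    constructor
    · rintro ⟨u, hu, hpi⟩
      obtain ⟨n, h1, h2⟩ := piE_eq_iff.mp hpi.symm
      refine ⟨-n, ?_⟩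
      have : (p.1 - (-n : ℤ), ((-1:ℝ)) ^ (-n) * p.2) = u := by
        ext
        · simp only [h1]; push_cast; ring
        · show ((-1:ℝ)) ^ (-n) * p.2 = u.2
          rw [neg_one_zpow_neg]; exact h2.symm
      rwa [this]
    · rintro ⟨n, hn⟩
      refine ⟨_, hn, ?_⟩
      apply piE_eq_iff.mpr
      refine ⟨n, by simp, by simp [neg_one_zpow_mul_self]⟩
  rw [this]
  exact isOpen_iUnion fun n => hU.preimage (by fun_prop)

lemma surjective_piE : Function.Surjective piE := Quot.exists_rep

instance : SecondCountableTopology Mext := by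
  obtain ⟨b, hbc, -, hb⟩ := TopologicalSpace.exists_countable_basis (ℝ × ℝ)
  refine TopologicalSpace.IsTopologicalBasis.secondCountableTopology
    (b := (fun v => piE '' v) '' b) ?_ (hbc.image _)
  refine TopologicalSpace.isTopologicalBasis_of_isOpen_of_nhds ?_ ?_
  · rintro u ⟨v, hv, rfl⟩
    exact isOpenMap_piE v (hb.isOpen hv)
  · intro a u ha hu
    obtain ⟨p, rfl⟩ := surjective_piE a
    obtain ⟨v, hvb, hpv, hvu⟩ := hb.exists_subset_of_mem_open (show p ∈ piE ⁻¹' u from ha)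
      (hu.preimage continuous_piE)
    exact ⟨piE '' v, ⟨v, hvb, rfl⟩, ⟨p, hpv, rfl⟩,
      (image_mono hvu).trans (image_preimage_subset _ _)⟩

instance : T2Space Mext := by
  rw [t2_iff_isClosed_diagonal]
  have hq : IsQuotientMap (Prod.map piE piE) :=
    IsOpenMap.isQuotientMap (isOpenMap_piE.prodMap isOpenMap_piE)
      (continuous_piE.prodMap continuous_piE)
      (surjective_piE.prodMap surjective_piE)
  rw [← hq.isClosed_preimage]
  have heq : Prod.map piE piE ⁻¹' (diagonal Mext) =
      {x : (ℝ × ℝ) × (ℝ × ℝ) | x.2.1 - x.1.1 ∈ range ((↑) : ℤ → ℝ)} ∩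
        {x | x.2.2 = Real.cos ((x.2.1 - x.1.1) * Real.pi) * x.1.2} := by
    ext ⟨p, q⟩
    simp only [mem_preimage, Prod.map_apply, mem_diagonal_iff, mem_inter_iff, mem_setOf_eq]
    rw [piE_eq_iff]
    constructor
    · rintro ⟨n, h1, h2⟩
      refine ⟨⟨n, by rw [h1]; ring⟩, ?_⟩
      rw [h1, h2]
      have : (p.1 + n - p.1) = (n : ℝ) := by ring
      rw [this]
      rw [show ((n:ℝ) * Real.pi) = (n : ℝ) * Real.pi - 0 from by ring, Real.cos_int_mul_pi_sub]
      simp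
    · rintro ⟨⟨n, hn⟩, h2⟩
      refine ⟨n, by linarith [hn], ?_⟩
      rw [h2, ← hn]
      rw [show ((n:ℝ) * Real.pi) = (n : ℝ) * Real.pi - 0 from by ring, Real.cos_int_mul_pi_sub]
      simp
  rw [heq]
  have h1 : IsClosed {x : (ℝ × ℝ) × (ℝ × ℝ) | x.2.1 - x.1.1 ∈ range ((↑) : ℤ → ℝ)} :=
    IsClosed.preimage (show Continuous fun x : (ℝ × ℝ) × (ℝ × ℝ) => x.2.1 - x.1.1 by fun_prop)
      Int.isClosedEmbedding_coe_real.isClosed_range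
  have h2 : IsClosed {x : (ℝ × ℝ) × (ℝ × ℝ) |
      x.2.2 = Real.cos ((x.2.1 - x.1.1) * Real.pi) * x.1.2} :=
    isClosed_eq (by fun_prop) (by fun_prop)
  exact h1.inter h2

end Aux
section Aux2

open Function Topology

/-! ### The canonical lift -/

lemma exists_lift (x : Mob) :
    ∃ p : ℝ × ℝ, piE p = x.1 ∧ p ∈ stripS ∧ p.1 ∈ Ico (-(1:ℝ)/2) (1/2) := by
  obtain ⟨q, hq, hpi⟩ := x.2
  set n : ℤ := -⌊q.1 + 1/2⌋ with hn
  refine ⟨(q.1 + n, ((-1:ℝ)) ^ n * q.2), ?_, stripS_rel hq (mobRel_mk q n), ?_⟩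
  · rw [piE_eq_iff.mpr (mobRel_equivalence.symm (mobRel_mk q n))]
    exact hpi
  · have h1 := Int.floor_le (q.1 + 1/2)
    have h2 := Int.lt_floor_add_one (q.1 + 1/2)
    constructor
    · show -(1:ℝ)/2 ≤ q.1 + n
      have : ((-⌊q.1 + 1/2⌋ : ℤ) : ℝ) = -(⌊q.1 + 1/2⌋ : ℝ) := by push_cast; ring
      rw [hn, this]
      linarith
    · show q.1 + (n : ℝ) < 1/2
      have : ((-⌊q.1 + 1/2⌋ : ℤ) : ℝ) = -(⌊q.1 + 1/2⌋ : ℝ) := by push_cast; ring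
      rw [hn, this]
      linarith

lemma lift_spec (x : Mob) :
    piE (Lift x) = x.1 ∧ Lift x ∈ stripS ∧ (Lift x).1 ∈ Ico (-(1:ℝ)/2) (1/2) :=
  Classical.epsilon_spec (exists_lift x)

lemma lift_piE (x : Mob) : piE (Lift x) = x.1 := (lift_spec x).1
lemma lift_strip (x : Mob) : Lift x ∈ stripS := (lift_spec x).2.1
lemma lift_mem_Ico (x : Mob) : (Lift x).1 ∈ Ico (-(1:ℝ)/2) (1/2) := (lift_spec x).2.2

lemma lift_unique {x : Mob} {p : ℝ × ℝ} (h1 : piE p = x.1) (h2 : p ∈ stripS)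
    (h3 : p.1 ∈ Ico (-(1:ℝ)/2) (1/2)) : Lift x = p := by
  have hrel : MobRel (Lift x) p := piE_eq_iff.mp ((lift_piE x).trans h1.symm)
  refine mobRel_eq_of_close hrel ?_
  have h4 := lift_mem_Ico x
  rw [abs_lt]
  constructor
  · have := h3.1; have := (h4 : (Lift x).1 ∈ _).2; simp only [mem_Ico] at h4 ⊢; linarith [h4.2]
  · have := h3.2; simp only [mem_Ico] at h3 h4; linarith [h4.1]

lemma lift_injective : Function.Injective Lift := by
  intro x y h
  apply Subtype.ext
  rw [← lift_piE x, ← lift_piE y, h]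

lemma clampY_eq {y : ℝ} (h : y ∈ Icc (-(1:ℝ)/2) (1/2)) : clampY y = y := by
  rw [clampY, min_eq_right h.2, max_eq_right h.1]

lemma toMob_val (p : ℝ × ℝ) : (toMob p).1 = piE (p.1, clampY p.2) := rfl

lemma toMob_val_strip {p : ℝ × ℝ} (hp : p ∈ stripS) : (toMob p).1 = piE p := by
  rw [toMob_val, clampY_eq hp]

lemma toMob_lift (x : Mob) : toMob (Lift x) = x := by
  apply Subtype.ext
  rw [toMob_val_strip (lift_strip x), lift_piE]

lemma lift_toMob {p : ℝ × ℝ} (h2 : p ∈ stripS) (h3 : p.1 ∈ Ico (-(1:ℝ)/2) (1/2)) :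
    Lift (toMob p) = p :=
  lift_unique (toMob_val_strip h2).symm h2 h3

/-! ### The cut line and the chart -/

lemma mem_lineL_iff {x : Mob} : x ∈ lineL ↔ (Lift x).1 = -(1:ℝ)/2 := by
  constructor
  · rintro ⟨y, hy, hpi⟩
    have hrel : MobRel ((1:ℝ)/2, y) (Lift x) := piE_eq_iff.mp (hpi.trans (lift_piE x).symm)
    obtain ⟨n, h1, h2⟩ := hrel
    have h3 := lift_mem_Ico x
    simp only [mem_Ico] at h3
    have hn : n = -1 := by
      have hl : -(1:ℝ)/2 ≤ 1/2 + n := by rw [← h1]; exact h3.1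
      have hr : (1:ℝ)/2 + n < 1/2 := by rw [← h1]; exact h3.2
      have : (n : ℝ) < 0 := by linarith
      have : (-1 : ℝ) ≤ n := by linarith
      have l1 : n < 0 := by exact_mod_cast ‹(n:ℝ) < 0›
      have l2 : -1 ≤ n := by exact_mod_cast ‹(-1:ℝ) ≤ n›
      omega
    rw [h1, hn]
    push_cast
    ring
  · intro h
    refine ⟨-(Lift x).2, ?_, ?_⟩
    · rw [mem_Icc]
      have := mem_stripS_iff.mp (lift_strip x)
      rw [abs_le] at this
      constructor <;> [linarith [this.2]; linarith [this.1]]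
    · rw [← lift_piE x]
      apply piE_eq_iff.mpr
      refine ⟨-1, ?_, ?_⟩
      · rw [h]; push_cast; ring
      · show (Lift x).2 = ((-1:ℝ)) ^ (-1 : ℤ) * -(Lift x).2
        norm_num
  
lemma mem_mhat_iff {x : Mob} : x ∈ Mhat ↔ (Lift x).1 ≠ -(1:ℝ)/2 := by
  rw [Mhat, mem_setOf_eq, mem_lineL_iff]

lemma lift_mem_Ioo_of_mhat {x : Mob} (hx : x ∈ Mhat) :
    (Lift x).1 ∈ Ioo (-(1:ℝ)/2) (1/2) := by
  have h1 := lift_mem_Ico x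
  have h2 := mem_mhat_iff.mp hx
  simp only [mem_Ico] at h1
  exact ⟨lt_of_le_of_ne h1.1 (Ne.symm h2), h1.2⟩

/-- The open set `U₀ = (-1/2, 1/2) × ℝ` in the plane. -/
def U0 : Set (ℝ × ℝ) := Ioo (-(1:ℝ)/2) (1/2) ×ˢ (univ : Set ℝ)

lemma isOpen_U0 : IsOpen U0 := (isOpen_Ioo).prod isOpen_univ

lemma mhat_eq : Mhat = Subtype.val ⁻¹' (piE '' U0) := by
  ext x
  show x ∈ Mhat ↔ ∃ p, p ∈ U0 ∧ piE p = x.1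
  constructor
  · intro hx
    exact ⟨Lift x, ⟨lift_mem_Ioo_of_mhat hx, trivial⟩, lift_piE x⟩
  · rintro ⟨p, ⟨hp1, -⟩, hpi⟩
    have hrel : MobRel p (Lift x) := piE_eq_iff.mp (hpi.trans (lift_piE x).symm)
    have hIco := lift_mem_Ico x
    simp only [mem_Ico] at hIco
    simp only [mem_Ioo] at hp1
    have : p = Lift x := by
      apply mobRel_eq_of_close hrel
      rw [abs_lt]
      constructor <;> [linarith [hIco.1, hp1.2]; linarith [hIco.2, hp1.1]]
    rw [mem_mhat_iff, ← this]
    intro hcon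
    rw [hcon] at hp1
    linarith [hp1.1]

lemma isOpen_mhat : IsOpen Mhat := by
  rw [mhat_eq]
  exact (isOpenMap_piE U0 isOpen_U0).preimage continuous_subtype_val

lemma lineL_eq_compl : lineL = Mhatᶜ := by
  ext x; simp [Mhat]

lemma continuousOn_lift : ContinuousOn Lift Mhat := by
  rw [continuousOn_iff']
  intro t ht
  refine ⟨Subtype.val ⁻¹' (piE '' (t ∩ U0)),
    (isOpenMap_piE _ (ht.inter isOpen_U0)).preimage continuous_subtype_val, ?_⟩
  ext x
  simp only [mem_inter_iff, mem_preimage, mem_image]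
  constructor
  · rintro ⟨hxt, hxm⟩
    exact ⟨⟨Lift x, ⟨hxt, lift_mem_Ioo_of_mhat hxm, trivial⟩, lift_piE x⟩, hxm⟩
  · rintro ⟨⟨p, ⟨hpt, hp1, -⟩, hpi⟩, hxm⟩
    refine ⟨?_, hxm⟩
    have hrel : MobRel p (Lift x) := piE_eq_iff.mp (hpi.trans (lift_piE x).symm)
    have hIco := lift_mem_Ico x
    simp only [mem_Ico] at hIco
    simp only [mem_Ioo] at hp1
    have hpe : p = Lift x := by
      apply mobRel_eq_of_close hrel
      rw [abs_lt]
      constructor <;> [linarith [hIco.1, hp1.2]; linarith [hIco.2, hp1.1]]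
    exact hpe ▸ hpt

lemma continuous_toMob : Continuous toMob := by
  apply Continuous.subtype_mk
  apply continuous_piE.comp
  exact continuous_fst.prodMk ((continuous_const.max (continuous_const.min continuous_snd)))

/-- injectivity of `toMob` on the open chart. -/
lemma toMob_inj_chart {p q : ℝ × ℝ} (hp1 : p.1 ∈ Ioo (-(1:ℝ)/2) (1/2)) (hp2 : p ∈ stripS)
    (hq1 : q.1 ∈ Ioo (-(1:ℝ)/2) (1/2)) (hq2 : q ∈ stripS) (h : toMob p = toMob q) : p = q := by
  have hval : piE p = piE q := by
    rw [← toMob_val_strip hp2, ← toMob_val_strip hq2, h]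
  apply mobRel_eq_of_close (piE_eq_iff.mp hval)
  simp only [mem_Ioo] at hp1 hq1
  rw [abs_lt]
  constructor <;> [linarith [hp1.2, hq1.1]; linarith [hp1.1, hq1.2]]

end Aux2
section Aux3

open Function Topology

/-! ### Instances on `Mob` -/

instance : T2Space Mob := inferInstanceAs (T2Space (Subtype _))
instance : SecondCountableTopology Mob :=
  inferInstanceAs (SecondCountableTopology (Subtype _))
instance : BorelSpace Mob := Subtype.borelSpace _

lemma measurableSet_range_mob : MeasurableSet (range (Subtype.val : Mob → Mext)) := by
  rw [Subtype.range_coe_subtype]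
  exact isClosed_range_mob.measurableSet

lemma mob_image_measurable {s : Set Mob} (hs : MeasurableSet s) :
    MeasurableSet (Subtype.val '' s) :=
  MeasurableSet.subtype_image isClosed_range_mob.measurableSet hs

lemma measurable_toMob : Measurable toMob := continuous_toMob.measurable

lemma measurableSet_fundDom : MeasurableSet fundDom :=
  (measurableSet_Ico).prod measurableSet_Icc

lemma fundDom_subset_strip : fundDom ⊆ stripS := fun p hp => hp.2

/-- The Möbius measure is the pushforward of Lebesgue measure on the fundamental domain. -/
lemma mobMeasure_eq_map : mobMeasure = (volume.restrict fundDom).map toMob := by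
  ext s hs
  have e1 : mobMeasure s = (Measure.map piE (volume.restrict fundDom)) (Subtype.val '' s) :=
    Measure.comap_apply _ Subtype.val_injective (fun t ht => mob_image_measurable ht) _ hs
  have e2 : (Measure.map piE (volume.restrict fundDom)) (Subtype.val '' s)
      = volume (piE ⁻¹' (Subtype.val '' s) ∩ fundDom) := by
    rw [Measure.map_apply continuous_piE.measurable (mob_image_measurable hs),
      Measure.restrict_apply' measurableSet_fundDom]
  have e3 : (Measure.map toMob (volume.restrict fundDom)) s
      = volume (toMob ⁻¹' s ∩ fundDom) := by
    rw [Measure.map_apply measurable_toMob hs, Measure.restrict_apply' measurableSet_fundDom]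
  rw [e1, e2, e3]
  congr 1
  ext p
  simp only [mem_inter_iff, mem_preimage, and_congr_left_iff]
  intro hp
  have hps : p ∈ stripS := fundDom_subset_strip hp
  show (∃ x, x ∈ s ∧ x.1 = piE p) ↔ toMob p ∈ s
  constructor
  · rintro ⟨x, hxs, hx⟩
    have : x = toMob p := Subtype.ext (by rw [toMob_val_strip hps]; exact hx)
    rwa [← this]
  · intro h
    exact ⟨toMob p, h, toMob_val_strip hps⟩

lemma volume_fundDom : volume fundDom = 1 := by
  rw [fundDom, Measure.volume_eq_prod, Measure.prod_prod, Real.volume_Ico, Real.volume_Icc]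
  norm_num

instance : IsProbabilityMeasure mobMeasure := by
  constructor
  rw [mobMeasure_eq_map, Measure.map_apply measurable_toMob MeasurableSet.univ,
    preimage_univ, Measure.restrict_apply' measurableSet_fundDom, univ_inter, volume_fundDom]

lemma null_line (a b c : ℝ) (h : ¬(a = 0 ∧ b = 0)) :
    volume {x : ℝ × ℝ | a * x.1 + b * x.2 = c} = 0 := by
  have hmeas : MeasurableSet {x : ℝ × ℝ | a * x.1 + b * x.2 = c} :=
    measurableSet_eq_fun (by fun_prop) measurable_const
  by_cases hb : b = 0
  · have ha : a ≠ 0 := fun h' => h ⟨h', hb⟩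
    subst hb
    have : {x : ℝ × ℝ | a * x.1 + 0 * x.2 = c} = ({c / a} : Set ℝ) ×ˢ (univ : Set ℝ) := by
      ext x
      simp only [mem_setOf_eq, mem_prod, mem_singleton_iff, mem_univ, and_true]
      rw [eq_div_iff ha]
      constructor <;> intro h' <;> linarith [h']
    rw [this, Measure.volume_eq_prod, Measure.prod_prod, Real.volume_singleton, zero_mul]
  · rw [Measure.volume_eq_prod, Measure.prod_apply hmeas]
    have hz : ∀ x : ℝ, (volume : Measure ℝ) (Prod.mk x ⁻¹' {y : ℝ × ℝ | a * y.1 + b * y.2 = c})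
        = 0 := by
      intro x
      have : Prod.mk x ⁻¹' {y : ℝ × ℝ | a * y.1 + b * y.2 = c} = {(c - a * x) / b} := by
        ext y
        simp only [mem_preimage, mem_setOf_eq, mem_singleton_iff]
        rw [eq_div_iff hb]
        constructor <;> intro h' <;> linarith [h']
      rw [this, Real.volume_singleton]
    simp only [hz]
    simp

/-- The cut line has measure zero. -/
lemma mobMeasure_lineL : mobMeasure lineL = 0 := by
  have hmeas : MeasurableSet lineL := by
    rw [lineL_eq_compl]; exact isOpen_mhat.measurableSet.compl
  rw [mobMeasure_eq_map, Measure.map_apply measurable_toMob hmeas,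
    Measure.restrict_apply' measurableSet_fundDom]
  refine measure_mono_null (fun p hp => ?_) (null_line 1 0 (1/2) (by norm_num))
  obtain ⟨hpl, hpf⟩ := hp
  have hstrip : p ∈ stripS := fundDom_subset_strip hpf
  have hp1 : p.1 ∈ Ico (0:ℝ) 1 := hpf.1
  simp only [mem_Ico] at hp1
  simp only [mem_setOf_eq]
  have hlift := mem_lineL_iff.mp hpl
  by_cases hcase : p.1 < 1/2
  · exfalso
    have : Lift (toMob p) = p :=
      lift_toMob hstrip (by constructor <;> [linarith [hp1.1]; exact hcase])
    rw [this] at hlift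
    linarith [hp1.1]
  · have : Lift (toMob p) = (p.1 - 1, -p.2) := by
      apply lift_unique
      · rw [toMob_val_strip hstrip]
        apply piE_eq_iff.mpr
        refine ⟨1, by push_cast; ring, ?_⟩
        show p.2 = ((-1:ℝ)) ^ (1:ℤ) * -p.2
        norm_num
      · rw [mem_stripS_iff]
        show |(-p.2)| ≤ (1:ℝ)/2
        rw [abs_neg]
        exact mem_stripS_iff.mp hstrip
      · constructor
        · show -(1:ℝ)/2 ≤ p.1 - 1
          push_neg at hcase
          linarith
        · show p.1 - 1 < 1/2
          linarith [hp1.2]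
    rw [this] at hlift
    simp only at hlift
    linarith [hlift]

/-- positivity of the Möbius measure on open sets. -/
instance : mobMeasure.IsOpenPosMeasure := by
  constructor
  intro U hU hne
  obtain ⟨x, hx⟩ := hne
  obtain ⟨Vv, hVv, rfl⟩ := isOpen_induced_iff.mp hU
  set p := Lift x with hp
  have hico := lift_mem_Ico x
  simp only [mem_Ico] at hico
  have habs := abs_le.mp (mem_stripS_iff.mp (lift_strip x))
  obtain ⟨q, hqpi, hq1, hq2⟩ : ∃ q : ℝ × ℝ, piE q = piE p ∧ ((0:ℝ) ≤ q.1 ∧ q.1 < 1) ∧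
      (-(1:ℝ)/2 ≤ q.2 ∧ q.2 ≤ 1/2) := by
    by_cases hc : p.1 < 0
    · refine ⟨(p.1 + 1, -p.2), ?_, ⟨?_, ?_⟩, ⟨?_, ?_⟩⟩
      · apply piE_eq_iff.mpr
        apply mobRel_equivalence.symm
        refine ⟨1, by push_cast; ring, ?_⟩
        show -p.2 = ((-1:ℝ)) ^ (1:ℤ) * p.2
        norm_num
      · show (0:ℝ) ≤ p.1 + 1; linarith [hico.1]
      · show p.1 + 1 < 1; linarith
      · show -(1:ℝ)/2 ≤ -p.2; linarith [habs.2]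
      · show -p.2 ≤ (1:ℝ)/2; linarith [habs.1]
    · exact ⟨p, rfl, ⟨not_lt.mp hc, by linarith [hico.2]⟩, ⟨by linarith [habs.1], habs.2⟩⟩
  have hqG : q ∈ piE ⁻¹' Vv := by
    rw [mem_preimage, hqpi, hp, lift_piE]
    exact hx
  obtain ⟨ε, hε, hball⟩ := Metric.isOpen_iff.mp (hVv.preimage continuous_piE) q hqG
  set δ : ℝ := min (ε/2) ((1 - q.1)/2) with hδ
  have hδpos : 0 < δ := by
    apply lt_min
    · linarith
    · linarith [hq1.2]
  have hδ1 : δ ≤ ε/2 := min_le_left _ _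
  have hδ2 : δ ≤ (1 - q.1)/2 := min_le_right _ _
  set ly : ℝ := max (-(1:ℝ)/2) (q.2 - δ) with hly
  set uy : ℝ := min ((1:ℝ)/2) (q.2 + δ) with huy
  have hlu : ly < uy := by
    apply max_lt <;> apply lt_min <;> [norm_num; linarith [hq2.1]; linarith [hq2.2]; linarith]
  set R : Set (ℝ × ℝ) := Ioo q.1 (q.1 + δ) ×ˢ Ioo ly uy with hR
  have hRsub : R ⊆ toMob ⁻¹' (Subtype.val ⁻¹' Vv) ∩ fundDom := by
    rintro r ⟨hr1, hr2⟩
    simp only [mem_Ioo] at hr1 hr2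
    have hrfund : r ∈ fundDom := by
      refine ⟨?_, ?_⟩
      · simp only [mem_Ico]
        constructor
        · linarith [hq1.1, hr1.1]
        · linarith [hr1.2]
      · simp only [mem_Icc]
        have l1 : -(1:ℝ)/2 ≤ ly := le_max_left _ _
        have l2 : uy ≤ (1:ℝ)/2 := min_le_left _ _
        constructor <;> [linarith [hr2.1]; linarith [hr2.2]]
    refine ⟨?_, hrfund⟩
    simp only [mem_preimage]
    show (toMob r).1 ∈ Vv
    rw [toMob_val_strip (fundDom_subset_strip hrfund)]
    apply hball
    rw [Metric.mem_ball, Prod.dist_eq]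
    apply max_lt
    · rw [Real.dist_eq, abs_lt]
      constructor <;> [linarith [hr1.1]; linarith [hr1.2]]
    · rw [Real.dist_eq, abs_lt]
      have l1 : q.2 - δ ≤ ly := le_max_right _ _
      have l2 : uy ≤ q.2 + δ := min_le_right _ _
      constructor <;> [linarith [hr2.1]; linarith [hr2.2]]
  have hvolR : volume R ≠ 0 := by
    rw [hR, Measure.volume_eq_prod, Measure.prod_prod, Real.volume_Ioo, Real.volume_Ioo]
    apply mul_ne_zero <;> rw [ne_eq, ENNReal.ofReal_eq_zero, not_le] <;> linarith
  intro hcon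
  rw [mobMeasure_eq_map,
    Measure.map_apply measurable_toMob hU.measurableSet,
    Measure.restrict_apply' measurableSet_fundDom] at hcon
  exact hvolR (measure_mono_null hRsub hcon)

end Aux3
section Aux4

open Function Topology

/-! ### Rays in the plane -/

/-- The closed ray `{s • v : s ≥ 0}`. -/
def ray (v : ℝ × ℝ) : Set (ℝ × ℝ) := {x | ∃ s : ℝ, 0 ≤ s ∧ x = s • v}

lemma smul_pair (s : ℝ) (v : ℝ × ℝ) : s • v = (s * v.1, s * v.2) := rfl

lemma ray_eq {v : ℝ × ℝ} (hv : v ≠ 0) :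
    ray v = {x : ℝ × ℝ | x.1 * v.2 - x.2 * v.1 = 0 ∧ 0 ≤ x.1 * v.1 + x.2 * v.2} := by
  ext x
  simp only [ray, mem_setOf_eq]
  constructor
  · rintro ⟨s, hs, rfl⟩
    rw [smul_pair]
    constructor
    · ring
    · have : s * v.1 * v.1 + s * v.2 * v.2 = s * (v.1^2 + v.2^2) := by ring
      simp only [this]
      positivity
  · rintro ⟨h1, h2⟩
    have hvv : 0 < v.1^2 + v.2^2 := by
      have : v.1 ≠ 0 ∨ v.2 ≠ 0 := by
        by_contra hcon
        push_neg at hcon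
        exact hv (Prod.ext hcon.1 hcon.2)
      rcases this with h | h <;> positivity
    refine ⟨(x.1 * v.1 + x.2 * v.2) / (v.1^2 + v.2^2), div_nonneg h2 hvv.le, ?_⟩
    rw [smul_pair]
    have hx1 : x.1 * (v.1^2 + v.2^2) = (x.1 * v.1 + x.2 * v.2) * v.1 := by
      linear_combination v.2 * h1
    have hx2 : x.2 * (v.1^2 + v.2^2) = (x.1 * v.1 + x.2 * v.2) * v.2 := by
      linear_combination (-v.1) * h1
    ext
    · show x.1 = _
      field_simp
      linarith [hx1]
    · show x.2 = _
      field_simp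
      linarith [hx2]

lemma isClosed_ray {v : ℝ × ℝ} (hv : v ≠ 0) : IsClosed (ray v) := by
  rw [ray_eq hv]
  exact (isClosed_eq (show Continuous fun x : ℝ × ℝ => x.1 * v.2 - x.2 * v.1 by fun_prop)
      continuous_const).inter
    (isClosed_le continuous_const
      (show Continuous fun x : ℝ × ℝ => x.1 * v.1 + x.2 * v.2 by fun_prop))

lemma ray_subset_line (v : ℝ × ℝ) : ray v ⊆ {x : ℝ × ℝ | x.1 * v.2 - x.2 * v.1 = 0} := by
  rintro x ⟨s, hs, rfl⟩
  rw [smul_pair]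
  simp only [mem_setOf_eq]
  ring

/-! ### The piecewise lift on the fundamental domain -/

/-- Explicit form of `Lift ∘ toMob` on the fundamental domain. -/
def Tmap (p : ℝ × ℝ) : ℝ × ℝ := if p.1 < 1/2 then p else (p.1 - 1, -p.2)

lemma measurable_Tmap : Measurable Tmap := by
  apply Measurable.ite
  · exact measurableSet_lt measurable_fst measurable_const
  · exact measurable_id
  · exact (measurable_fst.sub measurable_const).prodMk measurable_snd.neg

lemma lift_toMob_fund {p : ℝ × ℝ} (hp : p ∈ fundDom) : Lift (toMob p) = Tmap p := by
  have hstrip : p ∈ stripS := fundDom_subset_strip hp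
  have hp1 : p.1 ∈ Ico (0:ℝ) 1 := hp.1
  simp only [mem_Ico] at hp1
  rw [Tmap]
  split_ifs with hc
  · exact lift_toMob hstrip ⟨by linarith [hp1.1], hc⟩
  · apply lift_unique
    · rw [toMob_val_strip hstrip]
      apply piE_eq_iff.mpr
      refine ⟨1, by push_cast; ring, ?_⟩
      show p.2 = ((-1:ℝ)) ^ (1:ℤ) * -p.2
      norm_num
    · rw [mem_stripS_iff]
      show |(-p.2)| ≤ (1:ℝ)/2
      rw [abs_neg]
      exact mem_stripS_iff.mp hstrip
    · push_neg at hc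
      exact ⟨by show -(1:ℝ)/2 ≤ p.1 - 1; linarith, by show p.1 - 1 < 1/2; linarith [hp1.2]⟩

/-- The key null-set estimate: pairs of points whose lifts differ by a vector on a fixed
ray form a null set for the product measure. -/
lemma prod_null_of_ray {v : ℝ × ℝ} (hv : v ≠ 0) {B : Set (Mob × Mob)} (hBm : MeasurableSet B)
    (hBsub : B ⊆ {xy : Mob × Mob | Lift xy.1 - Lift xy.2 ∈ ray v}) :
    (mobMeasure.prod mobMeasure) B = 0 := by
  have hv' : ¬(v.1 = 0 ∧ v.2 = 0) := by
    intro hcon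
    exact hv (Prod.ext hcon.1 hcon.2)
  -- the bad set in the plane
  set Z : Set ((ℝ × ℝ) × (ℝ × ℝ)) :=
    {pq | (Tmap pq.1).1 * v.2 - (Tmap pq.1).2 * v.1 =
          (Tmap pq.2).1 * v.2 - (Tmap pq.2).2 * v.1} with hZ
  have hZm : MeasurableSet Z := by
    apply measurableSet_eq_fun
    · apply Measurable.sub
      · exact ((measurable_Tmap.comp measurable_fst).fst.mul measurable_const)
      · exact ((measurable_Tmap.comp measurable_fst).snd.mul measurable_const)
    · apply Measurable.sub
      · exact ((measurable_Tmap.comp measurable_snd).fst.mul measurable_const)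
      · exact ((measurable_Tmap.comp measurable_snd).snd.mul measurable_const)
  have hZnull : (volume.prod volume) Z = 0 := by
    rw [Measure.prod_apply hZm]
    have hsec : ∀ p : ℝ × ℝ, volume (Prod.mk p ⁻¹' Z) = 0 := by
      intro p
      have hnull : volume ({x : ℝ × ℝ |
            v.2 * x.1 + -v.1 * x.2 = (Tmap p).1 * v.2 - (Tmap p).2 * v.1}
          ∪ {x : ℝ × ℝ |
            v.2 * x.1 + v.1 * x.2 = ((Tmap p).1 * v.2 - (Tmap p).2 * v.1) + v.2}) = 0 := by
        apply measure_union_null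
        · exact null_line v.2 (-v.1) _ (by
            intro hcon
            exact hv' ⟨by linarith [hcon.2], hcon.1⟩)
        · exact null_line v.2 v.1 _ (by
            intro hcon
            exact hv' ⟨hcon.2, hcon.1⟩)
      refine measure_mono_null (fun q hq => ?_) hnull
      have hq' : (Tmap p).1 * v.2 - (Tmap p).2 * v.1
          = (Tmap q).1 * v.2 - (Tmap q).2 * v.1 := hq
      by_cases hcase : q.1 < 1/2
      · left
        have hTq : Tmap q = q := by rw [Tmap, if_pos hcase]
        rw [hTq] at hq'
        simp only [mem_setOf_eq]
        linarith [hq']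
      · right
        have hTq : Tmap q = (q.1 - 1, -q.2) := by rw [Tmap, if_neg hcase]
        rw [hTq] at hq'
        simp only [mem_setOf_eq]
        have e1 : ((q.1 - 1, -q.2) : ℝ × ℝ).1 = q.1 - 1 := rfl
        have e2 : ((q.1 - 1, -q.2) : ℝ × ℝ).2 = -q.2 := rfl
        rw [e1, e2] at hq'
        linarith [hq']
    simp only [hsec]
    simp
  -- transfer along `toMob × toMob`
  rw [mobMeasure_eq_map, Measure.map_prod_map _ _ measurable_toMob measurable_toMob,
    Measure.map_apply (measurable_toMob.prodMap measurable_toMob) hBm,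
    Measure.prod_restrict, Measure.restrict_apply' (measurableSet_fundDom.prod measurableSet_fundDom)]
  refine measure_mono_null (fun pq hpq => ?_) hZnull
  obtain ⟨p, q⟩ := pq
  obtain ⟨hpre, hpf, hqf⟩ := hpq
  have hray := hBsub hpre
  simp only [mem_setOf_eq, Prod.map_apply] at hray
  rw [lift_toMob_fund hpf, lift_toMob_fund hqf] at hray
  have hline := ray_subset_line v hray
  simp only [mem_setOf_eq] at hline
  have h1 : (Tmap p - Tmap q).1 = (Tmap p).1 - (Tmap q).1 := rfl
  have h2 : (Tmap p - Tmap q).2 = (Tmap p).2 - (Tmap q).2 := rfl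
  rw [h1, h2] at hline
  show (Tmap p).1 * v.2 - (Tmap p).2 * v.1 = (Tmap q).1 * v.2 - (Tmap q).2 * v.1
  linarith [hline]

end Aux4
section Aux5

open Function Topology

/-! ### Segment lemmas -/

lemma seg_fst (a b : ℝ × ℝ) (t : ℝ) : (seg a b t).1 = (1 - t) * a.1 + t * b.1 := by
  simp [seg, Prod.fst_add, smul_eq_mul]

lemma seg_snd (a b : ℝ × ℝ) (t : ℝ) : (seg a b t).2 = (1 - t) * a.2 + t * b.2 := by
  simp [seg, Prod.snd_add, smul_eq_mul]

lemma seg_zero (a b : ℝ × ℝ) : seg a b 0 = a := by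
  simp [seg]

lemma segMem_Ioo {l u a b t : ℝ} (ha : a ∈ Ioo l u) (hb : b ∈ Ioo l u)
    (ht : t ∈ Icc (0:ℝ) 1) : (1 - t) * a + t * b ∈ Ioo l u := by
  simp only [mem_Ioo] at ha hb ⊢
  simp only [mem_Icc] at ht
  rcases eq_or_lt_of_le ht.1 with h0 | h0
  · rw [← h0]
    constructor <;> [nlinarith [ha.1]; nlinarith [ha.2]]
  constructor
  · nlinarith [mul_nonneg (by linarith [ht.2] : (0:ℝ) ≤ 1 - t)
      (by linarith [ha.1] : (0:ℝ) ≤ a - l), mul_pos h0 (by linarith [hb.1] : (0:ℝ) < b - l)]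
  · nlinarith [mul_nonneg (by linarith [ht.2] : (0:ℝ) ≤ 1 - t)
      (by linarith [ha.2] : (0:ℝ) ≤ u - a), mul_pos h0 (by linarith [hb.2] : (0:ℝ) < u - b)]

lemma segMem_Icc {l u a b t : ℝ} (ha : a ∈ Icc l u) (hb : b ∈ Icc l u)
    (ht : t ∈ Icc (0:ℝ) 1) : (1 - t) * a + t * b ∈ Icc l u := by
  simp only [mem_Icc] at ha hb ht ⊢
  constructor
  · nlinarith [mul_nonneg (by linarith [ht.2] : (0:ℝ) ≤ 1 - t)
      (by linarith [ha.1] : (0:ℝ) ≤ a - l), mul_nonneg ht.1 (by linarith [hb.1] : (0:ℝ) ≤ b - l)]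
  · nlinarith [mul_nonneg (by linarith [ht.2] : (0:ℝ) ≤ 1 - t)
      (by linarith [ha.2] : (0:ℝ) ≤ u - a), mul_nonneg ht.1 (by linarith [hb.2] : (0:ℝ) ≤ u - b)]

lemma lift_snd_mem_Icc (x : Mob) : (Lift x).2 ∈ Icc (-(1:ℝ)/2) (1/2) := lift_strip x

lemma seg_mem_chart {x y : Mob} (hx : x ∈ Mhat) (hy : y ∈ Mhat) {t : ℝ}
    (ht : t ∈ Icc (0:ℝ) 1) :
    (seg (Lift x) (Lift y) t).1 ∈ Ioo (-(1:ℝ)/2) (1/2) ∧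
      seg (Lift x) (Lift y) t ∈ stripS := by
  constructor
  · rw [seg_fst]
    exact segMem_Ioo (lift_mem_Ioo_of_mhat hx) (lift_mem_Ioo_of_mhat hy) ht
  · show (seg (Lift x) (Lift y) t).2 ∈ Icc (-(1:ℝ)/2) (1/2)
    rw [seg_snd]
    exact segMem_Icc (lift_snd_mem_Icc x) (lift_snd_mem_Icc y) ht

/-! ### The good and bad sets in configuration space -/

variable (n : ℕ) (zbar : Fin n → Mob)

/-- The good open set of pairs for indices `i j`. -/
def Wset (i j : Fin n) : Set (Mob × Mob) :=
  {xy | xy.1 ∈ Mhat ∧ xy.2 ∈ Mhat ∧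
    Lift xy.1 - Lift xy.2 ∉ ray (Lift (zbar j) - Lift (zbar i))}

/-- The good set in the product space. -/
def Vset : Set (Fin n → Mob) :=
  {f | ∀ i, f i ∈ Mhat} ∩ ⋂ i, ⋂ j, {f | i ≠ j → (f i, f j) ∈ Wset n zbar i j}

lemma continuousOn_liftPair :
    ContinuousOn (fun xy : Mob × Mob => Lift xy.1 - Lift xy.2) (Mhat ×ˢ Mhat) := by
  apply ContinuousOn.sub
  · exact continuousOn_lift.comp continuous_fst.continuousOn (fun xy hxy => hxy.1)
  · exact continuousOn_lift.comp continuous_snd.continuousOn (fun xy hxy => hxy.2)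

lemma isOpen_Wset {i j : Fin n} (hv : Lift (zbar j) - Lift (zbar i) ≠ 0) :
    IsOpen (Wset n zbar i j) := by
  have : Wset n zbar i j = (Mhat ×ˢ Mhat) ∩
      (fun xy : Mob × Mob => Lift xy.1 - Lift xy.2) ⁻¹'
        (ray (Lift (zbar j) - Lift (zbar i)))ᶜ := by
    ext xy
    simp only [Wset, mem_setOf_eq, mem_inter_iff, mem_prod, mem_preimage, mem_compl_iff]
    tauto
  rw [this]
  exact ContinuousOn.isOpen_inter_preimage continuousOn_liftPair
    (isOpen_mhat.prod isOpen_mhat) (isClosed_ray hv).isOpen_compl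

lemma isOpen_Vset (hv : ∀ i j : Fin n, i ≠ j → Lift (zbar j) - Lift (zbar i) ≠ 0) :
    IsOpen (Vset n zbar) := by
  apply IsOpen.inter
  · have : {f : Fin n → Mob | ∀ i, f i ∈ Mhat} = ⋂ i, (fun f : Fin n → Mob => f i) ⁻¹' Mhat := by
      ext f; simp
    rw [this]
    exact isOpen_iInter_of_finite fun i => isOpen_mhat.preimage (continuous_apply i)
  · refine isOpen_iInter_of_finite fun i => isOpen_iInter_of_finite fun j => ?_
    by_cases hij : i = j
    · have : {f : Fin n → Mob | i ≠ j → (f i, f j) ∈ Wset n zbar i j} = univ := by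
        ext f; simp [hij]
      rw [this]; exact isOpen_univ
    · have : {f : Fin n → Mob | i ≠ j → (f i, f j) ∈ Wset n zbar i j}
          = (fun f : Fin n → Mob => (f i, f j)) ⁻¹' Wset n zbar i j := by
        ext f; simp [hij]
      rw [this]
      exact (isOpen_Wset n zbar (hv i j hij)).preimage
        ((continuous_apply i).prodMk (continuous_apply j))

/-- The key characterization of `OmegaSet`. -/
lemma omega_eq (hinj : Function.Injective zbar) (hhat : ∀ i, zbar i ∈ Mhat) :
    OmegaSet n zbar = Subtype.val ⁻¹' Vset n zbar := by
  ext z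
  obtain ⟨f, hf⟩ := z
  change (⟨f, hf⟩ : Conf Mob n) ∈ OmegaSet n zbar ↔ f ∈ Vset n zbar
  simp only [OmegaSet, Vset, Wset, mem_setOf_eq, mem_preimage, mem_inter_iff, mem_iInter]
  constructor
  · rintro ⟨hmh, hseg⟩
    refine ⟨hmh, fun i j hij => ⟨hmh i, hmh j, ?_⟩⟩
    rintro ⟨s, hs, hrayeq⟩
    have hb1 : (Lift (f i)).1 - (Lift (f j)).1
        = s * ((Lift (zbar j)).1 - (Lift (zbar i)).1) := by
      have := congrArg Prod.fst hrayeq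
      simpa [smul_pair] using this
    have hb2 : (Lift (f i)).2 - (Lift (f j)).2
        = s * ((Lift (zbar j)).2 - (Lift (zbar i)).2) := by
      have := congrArg Prod.snd hrayeq
      simpa [smul_pair] using this
    set t : ℝ := 1 / (s + 1) with htdef
    have hsp : (0:ℝ) < s + 1 := by linarith
    have ht : t ∈ Icc (0:ℝ) 1 := by
      constructor
      · positivity
      · rw [htdef, div_le_one hsp]; linarith
    have ht1 : t * (s + 1) = 1 := by
      rw [htdef]; field_simp
    have hsegeq : seg (Lift (zbar i)) (Lift (f i)) t = seg (Lift (zbar j)) (Lift (f j)) t := by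
      apply Prod.ext
      · rw [seg_fst, seg_fst]
        linear_combination t * hb1 + ((Lift (zbar j)).1 - (Lift (zbar i)).1) * ht1
      · rw [seg_snd, seg_snd]
        linear_combination t * hb2 + ((Lift (zbar j)).2 - (Lift (zbar i)).2) * ht1
    exact hij (hseg t ht (congrArg toMob hsegeq))
  · rintro ⟨hmh, hW⟩
    refine ⟨hmh, fun t ht i j hijeq => ?_⟩
    by_contra hij
    have hchi := seg_mem_chart (hhat i) (hmh i) ht
    have hchj := seg_mem_chart (hhat j) (hmh j) ht
    have hsegeq : seg (Lift (zbar i)) (Lift (f i)) t = seg (Lift (zbar j)) (Lift (f j)) t :=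
      toMob_inj_chart hchi.1 hchi.2 hchj.1 hchj.2 hijeq
    by_cases ht0 : t = 0
    · subst ht0
      rw [seg_zero, seg_zero] at hsegeq
      exact hij (hinj (lift_injective hsegeq))
    · have htpos : 0 < t := lt_of_le_of_ne ht.1 (Ne.symm ht0)
      have hc1 := congrArg Prod.fst hsegeq
      have hc2 := congrArg Prod.snd hsegeq
      rw [seg_fst, seg_fst] at hc1
      rw [seg_snd, seg_snd] at hc2
      apply (hW i j hij).2.2
      refine ⟨(1 - t) / t, div_nonneg (by linarith [ht.2]) ht.1, ?_⟩
      apply Prod.ext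
      · show (Lift (f i)).1 - (Lift (f j)).1
          = (1 - t) / t * ((Lift (zbar j)).1 - (Lift (zbar i)).1)
        field_simp
        linear_combination hc1
      · show (Lift (f i)).2 - (Lift (f j)).2
          = (1 - t) / t * ((Lift (zbar j)).2 - (Lift (zbar i)).2)
        field_simp
        linear_combination hc2

/-! ### Measure-theoretic lemmas on configuration space -/

lemma injSet_isOpen : IsOpen {f : Fin n → Mob | Function.Injective f} := by
  have heq : {f : Fin n → Mob | Function.Injective f}
      = ⋂ i, ⋂ j, {f : Fin n → Mob | f i = f j → i = j} := by
    ext f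
    simp only [mem_setOf_eq, mem_iInter]
    exact ⟨fun h i j hh => h hh, fun h a b hh => h a b hh⟩
  rw [heq]
  refine isOpen_iInter_of_finite fun i => isOpen_iInter_of_finite fun j => ?_
  by_cases hij : i = j
  · have : {f : Fin n → Mob | f i = f j → i = j} = univ := by
      ext f; simp [hij]
    rw [this]; exact isOpen_univ
  · have : {f : Fin n → Mob | f i = f j → i = j} = {f : Fin n → Mob | f i ≠ f j} := by
      ext f
      simp only [mem_setOf_eq]
      constructor
      · intro h hne
        exact hij (h hne)
      · intro h
        exact fun hh => absurd hh h
    rw [this]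
    have : {f : Fin n → Mob | f i ≠ f j}
        = (fun f : Fin n → Mob => (f i, f j)) ⁻¹' (diagonal Mob)ᶜ := by
      ext f; simp [mem_diagonal_iff]
    rw [this]
    exact isClosed_diagonal.isOpen_compl.preimage
      ((continuous_apply i).prodMk (continuous_apply j))

lemma conf_image_measurable {s : Set (Conf Mob n)} (hs : MeasurableSet s) :
    MeasurableSet (Subtype.val '' s) := by
  obtain ⟨t, ht, rfl⟩ := hs
  rw [image_preimage_eq_inter_range, Subtype.range_coe_subtype]
  exact ht.inter (injSet_isOpen n).measurableSet

lemma confMeasure_apply {s : Set (Conf Mob n)} (hs : MeasurableSet s) :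
    confMeasure n s = (Measure.pi fun _ : Fin n => mobMeasure) (Subtype.val '' s) :=
  Measure.comap_apply _ Subtype.val_injective (fun t ht => conf_image_measurable n ht) _ hs

/-- The two-coordinate marginal of the product measure. -/
lemma pair_map_eq {i j : Fin n} (hij : i ≠ j) :
    (Measure.pi fun _ : Fin n => mobMeasure).map (fun f => (f i, f j))
      = mobMeasure.prod mobMeasure := by
  symm
  apply Measure.prod_eq
  intro s t hs ht
  rw [Measure.map_apply ((measurable_pi_apply i).prodMk (measurable_pi_apply j)) (hs.prod ht)]
  have hpre : (fun f : Fin n → Mob => (f i, f j)) ⁻¹' (s ×ˢ t)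
      = Set.pi univ (fun k => if k = i then s else if k = j then t else univ) := by
    ext f
    simp only [mem_preimage, mem_prod, mem_pi, mem_univ, forall_true_left]
    constructor
    · rintro ⟨h1, h2⟩ k
      by_cases hki : k = i
      · subst hki; simp only [if_pos rfl]; exact h1
      · by_cases hkj : k = j
        · subst hkj; simp only [if_neg hki, if_pos rfl]; exact h2
        · simp only [if_neg hki, if_neg hkj]; trivial
    · intro h
      constructor
      · have := h i; simpa using this
      · have := h j
        rw [if_neg (Ne.symm hij), if_pos rfl] at this
        exact this
  rw [hpre, Measure.pi_pi]
  rw [← Finset.mul_prod_erase Finset.univ _ (Finset.mem_univ i),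
    ← Finset.mul_prod_erase (Finset.univ.erase i) _
      (Finset.mem_erase.mpr ⟨Ne.symm hij, Finset.mem_univ j⟩)]
  rw [if_pos rfl, if_neg (Ne.symm hij), if_pos rfl]
  have hone : ∏ k ∈ (Finset.univ.erase i).erase j,
      mobMeasure (if k = i then s else if k = j then t else univ) = 1 := by
    apply Finset.prod_eq_one
    intro k hk
    obtain ⟨hkj, hki'⟩ := Finset.mem_erase.mp hk
    obtain ⟨hki, -⟩ := Finset.mem_erase.mp hki'
    rw [if_neg hki, if_neg hkj]
    exact measure_univ
  rw [hone, mul_one]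

lemma pi_eval_lineL (i : Fin n) :
    (Measure.pi fun _ : Fin n => mobMeasure) {f : Fin n → Mob | f i ∈ lineL} = 0 := by
  have heq : {f : Fin n → Mob | f i ∈ lineL}
      = Set.pi univ (fun k => if k = i then lineL else univ) := by
    ext f
    simp only [mem_setOf_eq, mem_pi, mem_univ, forall_true_left]
    constructor
    · intro h k
      by_cases hki : k = i
      · subst hki; simp only [if_pos rfl]; exact h
      · simp only [if_neg hki]; trivial
    · intro h
      have := h i; simpa using this
  rw [heq, Measure.pi_pi]
  apply Finset.prod_eq_zero (Finset.mem_univ i)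
  simp [mobMeasure_lineL]

/-- The bad pair set. -/
def Bset (i j : Fin n) : Set (Mob × Mob) := (Mhat ×ˢ Mhat) ∩ (Wset n zbar i j)ᶜ

lemma Bset_subset_ray (i j : Fin n) :
    Bset n zbar i j ⊆ {xy : Mob × Mob |
      Lift xy.1 - Lift xy.2 ∈ ray (Lift (zbar j) - Lift (zbar i))} := by
  rintro xy ⟨⟨h1, h2⟩, hW⟩
  simp only [Wset, mem_setOf_eq, mem_compl_iff, not_and, not_not] at hW
  exact hW h1 h2

lemma compl_Vset_subset :
    (Vset n zbar)ᶜ ⊆ (⋃ i, {f : Fin n → Mob | f i ∈ lineL})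
      ∪ ⋃ p : Fin n × Fin n, (if p.1 = p.2 then (∅ : Set (Fin n → Mob))
          else (fun f : Fin n → Mob => (f p.1, f p.2)) ⁻¹' Bset n zbar p.1 p.2) := by
  intro f hf
  simp only [Vset, mem_compl_iff, mem_inter_iff, mem_setOf_eq, mem_iInter, not_and, not_forall]
    at hf
  by_cases hmh : ∀ i, f i ∈ Mhat
  · obtain ⟨i, j, hij, hW⟩ := hf hmh
    right
    refine mem_iUnion.mpr ⟨(i, j), ?_⟩
    rw [if_neg hij]
    exact ⟨⟨hmh i, hmh j⟩, hW⟩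
  · left
    push_neg at hmh
    obtain ⟨i, hi⟩ := hmh
    refine mem_iUnion.mpr ⟨i, ?_⟩
    simpa [lineL_eq_compl] using hi

end Aux5
/-- **Statement 9.** For `n ≥ 1` and a base configuration `z̄ ∈ X_n(M̂)`, the set `Ω^{2n}`
is open and dense in `X_n(M)` and has full measure in `X_n(M)`. -/
theorem omegaSet_isOpen_dense_fullMeasure
    (n : ℕ) (hn : 1 ≤ n) (zbar : Fin n → Mob)
    (hinj : Function.Injective zbar) (hhat : ∀ i, zbar i ∈ Mhat) :
    IsOpen (OmegaSet n zbar) ∧ Dense (OmegaSet n zbar) ∧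
      confMeasure n (OmegaSet n zbar)ᶜ = 0 := by
  have hvne : ∀ i j : Fin n, i ≠ j → Lift (zbar j) - Lift (zbar i) ≠ 0 := by
    intro i j hij
    rw [sub_ne_zero]
    intro h
    exact hij (hinj (lift_injective h)).symm
  have homega := omega_eq n zbar hinj hhat
  have hVopen : IsOpen (Vset n zbar) := isOpen_Vset n zbar hvne
  have hopen : IsOpen (OmegaSet n zbar) := by
    rw [homega]
    exact hVopen.preimage continuous_subtype_val
  -- the complement is null
  have hnull : confMeasure n (OmegaSet n zbar)ᶜ = 0 := by
    have hcompl : (OmegaSet n zbar)ᶜ = Subtype.val ⁻¹' (Vset n zbar)ᶜ := by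
      rw [homega, preimage_compl]; rfl
    have hmeas : MeasurableSet ((OmegaSet n zbar)ᶜ) := by
      rw [hcompl]
      exact measurable_subtype_coe hVopen.measurableSet.compl
    rw [confMeasure_apply n hmeas, hcompl]
    refine measure_mono_null (image_preimage_subset _ _) ?_
    refine measure_mono_null (compl_Vset_subset n zbar) ?_
    apply measure_union_null
    · exact measure_iUnion_null fun i => pi_eval_lineL n i
    · apply measure_iUnion_null
      rintro ⟨i, j⟩
      by_cases hij : i = j
      · rw [if_pos hij]
        simp
      · rw [if_neg hij]
        have hBm : MeasurableSet (Bset n zbar i j) :=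
          ((isOpen_mhat.prod isOpen_mhat).measurableSet).inter
            (isOpen_Wset n zbar (hvne i j hij)).measurableSet.compl
        rw [show ((Measure.pi fun _ : Fin n => mobMeasure)
              ((fun f : Fin n → Mob => (f i, f j)) ⁻¹' Bset n zbar i j))
            = ((Measure.pi fun _ : Fin n => mobMeasure).map
                (fun f : Fin n → Mob => (f i, f j))) (Bset n zbar i j) from
          (Measure.map_apply ((measurable_pi_apply i).prodMk (measurable_pi_apply j)) hBm).symm]
        rw [pair_map_eq n hij]
        exact prod_null_of_ray (hvne i j hij) hBm (Bset_subset_ray n zbar i j)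
  refine ⟨hopen, ?_, hnull⟩
  -- density
  rw [dense_iff_inter_open]
  intro U hU hne
  by_contra hcon
  rw [not_nonempty_iff_eq_empty] at hcon
  have hsub : U ⊆ (OmegaSet n zbar)ᶜ := by
    intro u hu homem
    have : u ∈ U ∩ OmegaSet n zbar := ⟨hu, homem⟩
    rw [hcon] at this
    exact this
  obtain ⟨O, hO, rfl⟩ := isOpen_induced_iff.mp hU
  obtain ⟨z, hz⟩ := hne
  have hpos : (Measure.pi fun _ : Fin n => mobMeasure)
      (O ∩ {f : Fin n → Mob | Function.Injective f}) ≠ 0 :=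
    IsOpen.measure_ne_zero _ (hO.inter (injSet_isOpen n)) ⟨z.1, hz, z.2⟩
  apply hpos
  have hUm : MeasurableSet (Subtype.val ⁻¹' O : Set (Conf Mob n)) :=
    measurable_subtype_coe hO.measurableSet
  have himg : Subtype.val '' (Subtype.val ⁻¹' O : Set (Conf Mob n))
      = O ∩ {f : Fin n → Mob | Function.Injective f} := by
    ext f
    constructor
    · rintro ⟨z, hz, rfl⟩
      exact ⟨hz, z.2⟩
    · rintro ⟨hf, hfi⟩
      exact ⟨⟨f, hfi⟩, hf, rfl⟩
  rw [← himg, ← confMeasure_apply n hUm]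
  exact measure_mono_null hsub hnull

end
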